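/- Let Ω be a finite set of size n, k ≤ n, and suppose T is a random k-element subset, F a random information resource, X a random element of Ω with X conditionally independent of T given F. With I_Ω = log₂(n/k) and q = Pr(X ∈ T), it holds that q ≤ (I(T;F) + D(P_T ∥ U_T) + 1)/I_Ω, where I(T;F) is the mutual information, P_T the marginal of T, and U_T the uniform distribution on k-subsets. -/

import Mathlib

/-- `klTerm2 a b = a * log₂ (a / b)`, with the convention `0 * log₂ (0 / b) = 0`. -/
noncomputable def klTerm2 (a b : ℝ) : ℝ := if a = 0 then 0 else a * Real.logb 2 (a / b)

/-- natural-log KL term -/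
noncomputable def klN (a b : ℝ) : ℝ := if a = 0 then 0 else a * Real.log (a / b)

lemma klN_zero (b : ℝ) : klN 0 b = 0 := by simp [klN]

lemma klTerm2_eq (a b : ℝ) : (if a = 0 then 0 else a * Real.logb 2 (a / b)) = klN a b / Real.log 2 := by
  unfold klN Real.logb
  split <;> simp [mul_div_assoc]

/-- pointwise Gibbs: klN a b ≥ a - b for a,b ≥ 0 with (b=0 → a=0). -/
lemma sub_le_klN {a b : ℝ} (ha : 0 ≤ a) (hb : 0 ≤ b) (hab : b = 0 → a = 0) :
    a - b ≤ klN a b := by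
  rcases eq_or_lt_of_le ha with h0 | ha'
  · simp [klN, ← h0]; linarith
  · have hb' : 0 < b := lt_of_le_of_ne hb (fun h => by simp [hab h.symm] at ha')
    have hd : 0 < a / b := div_pos ha' hb'
    have := Real.one_sub_inv_le_log_of_pos hd
    have hinv : (a / b)⁻¹ = b / a := by field_simp
    rw [klN, if_neg ha'.ne']
    rw [hinv] at this
    calc a - b = a * (1 - b / a) := by field_simp
    _ ≤ a * Real.log (a / b) := by
        apply mul_le_mul_of_nonneg_left this ha'.le

/-- log-sum inequality -/
lemma klN_sum_le {ι : Type*} (s : Finset ι) (a b : ι → ℝ)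
    (ha : ∀ i ∈ s, 0 ≤ a i) (hb : ∀ i ∈ s, 0 ≤ b i)
    (hab : ∀ i ∈ s, b i = 0 → a i = 0) :
    klN (∑ i ∈ s, a i) (∑ i ∈ s, b i) ≤ ∑ i ∈ s, klN (a i) (b i) := by
  set A := ∑ i ∈ s, a i with hA
  set B := ∑ i ∈ s, b i with hB
  have hklN_nonneg : ∀ i ∈ s, a i - b i * (A / B) ≤ klN (a i) (b i) → True := fun _ _ _ => trivial
  rcases eq_or_lt_of_le (Finset.sum_nonneg ha) with h0 | hA'
  · -- A = 0
    have hz : ∀ i ∈ s, a i = 0 := by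
      intro i hi
      exact (Finset.sum_eq_zero_iff_of_nonneg ha).1 h0.symm i hi
    rw [show klN A B = 0 by rw [hA, ← h0, klN_zero]]
    apply Finset.sum_nonneg
    intro i hi; rw [hz i hi, klN_zero]
  · -- A > 0
    have hB' : 0 < B := by
      obtain ⟨i, hi, hai⟩ : ∃ i ∈ s, a i ≠ 0 := by
        by_contra h; push_neg at h
        exact hA'.ne' (Finset.sum_eq_zero h)
      have hbi : 0 < b i := lt_of_le_of_ne (hb i hi) (fun h => hai (hab i hi h.symm))
      calc (0:ℝ) < b i := hbi
      _ ≤ B := Finset.single_le_sum hb hi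
    -- termwise: klN (a i) (b i) = klN (a i) (b i * (A/B)) + a i * log (A/B)
    have hterm : ∀ i ∈ s, klN (a i) (b i) = klN (a i) (b i * (A/B)) + a i * Real.log (A/B) := by
      intro i hi
      rcases eq_or_ne (a i) 0 with h | h
      · simp [klN, h]
      · have hai : 0 < a i := lt_of_le_of_ne (ha i hi) (Ne.symm h)
        have hbi : 0 < b i := lt_of_le_of_ne (hb i hi) (fun hh => h (hab i hi hh.symm))
        have hAB : 0 < A / B := div_pos hA' hB'
        rw [klN, klN, if_neg h, if_neg h, ← mul_add, ← Real.log_mul (by positivity) (by positivity)]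
        congr 2
        field_simp
        ring_nf
        exact (mul_inv_cancel₀ (a := A) hA'.ne').symm
      -- done
    rw [Finset.sum_congr rfl hterm, Finset.sum_add_distrib, ← Finset.sum_mul]
    have h1 : ∑ i ∈ s, klN (a i) (b i * (A/B)) ≥ 0 := by
      calc (0:ℝ) = ∑ i ∈ s, (a i - b i * (A/B)) := by
            rw [Finset.sum_sub_distrib, ← Finset.sum_mul, ← hA, ← hB]
            field_simp
            ring
      _ ≤ _ := by
            apply Finset.sum_le_sum
            intro i hi
            apply sub_le_klN (ha i hi) (mul_nonneg (hb i hi) (le_of_lt (div_pos hA' hB')))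
            intro hz
            rcases mul_eq_zero.1 hz with h | h
            · exact hab i hi h
            · exact absurd h (div_pos hA' hB').ne'
    rw [klN, if_neg hA'.ne']
    rw [Real.log_div hA'.ne' hB'.ne']
    rw [← Real.log_div hA'.ne' hB'.ne']
    nlinarith [h1]

/-- binary split of a KL term by a weight g ∈ [0,1] -/
lemma klN_split {a b g : ℝ} (ha : 0 ≤ a) (hb : 0 ≤ b) (hab : b = 0 → a = 0)
    (hg0 : 0 ≤ g) (hg1 : g ≤ 1) :
    klN a b = klN (a * g) (b * g) + klN (a * (1 - g)) (b * (1 - g)) := by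
  rcases eq_or_ne a 0 with rfl | ha'
  · simp [klN]
  have hb' : 0 < b := lt_of_le_of_ne hb (fun h => ha' (hab h.symm))
  have ha'' : 0 < a := lt_of_le_of_ne ha (Ne.symm ha')
  rcases eq_or_ne g 0 with rfl | hg
  · simp [klN, ha']
  rcases eq_or_ne g 1 with rfl | hg'
  · simp [klN, ha']
  have hg2 : 0 < g := lt_of_le_of_ne hg0 (Ne.symm hg)
  have hg3 : 0 < 1 - g := by cases lt_or_eq_of_le hg1 with
    | inl h => linarith
    | inr h => exact absurd h hg'
  rw [klN, klN, klN, if_neg ha', if_neg (by positivity : (0:ℝ) < a * g).ne',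
    if_neg (by positivity : (0:ℝ) < a * (1-g)).ne',
    mul_div_mul_right _ _ hg2.ne', mul_div_mul_right _ _ hg3.ne']
  ring

/-- binary data-processing inequality -/
lemma klN_dp {ι : Type*} (s : Finset ι) (a b g : ι → ℝ)
    (ha : ∀ i ∈ s, 0 ≤ a i) (hb : ∀ i ∈ s, 0 ≤ b i)
    (hab : ∀ i ∈ s, b i = 0 → a i = 0)
    (hg0 : ∀ i ∈ s, 0 ≤ g i) (hg1 : ∀ i ∈ s, g i ≤ 1)
    (hsl : ∀ (c d : ι → ℝ), (∀ i ∈ s, 0 ≤ c i) → (∀ i ∈ s, 0 ≤ d i) →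
       (∀ i ∈ s, d i = 0 → c i = 0) →
       klN (∑ i ∈ s, c i) (∑ i ∈ s, d i) ≤ ∑ i ∈ s, klN (c i) (d i)) :
    klN (∑ i ∈ s, a i * g i) (∑ i ∈ s, b i * g i)
      + klN (∑ i ∈ s, a i * (1 - g i)) (∑ i ∈ s, b i * (1 - g i))
      ≤ ∑ i ∈ s, klN (a i) (b i) := by
  have h1 := hsl (fun i => a i * g i) (fun i => b i * g i)
    (fun i hi => mul_nonneg (ha i hi) (hg0 i hi))
    (fun i hi => mul_nonneg (hb i hi) (hg0 i hi))
    (fun i hi h => by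
      rcases mul_eq_zero.1 h with h | h
      · rw [hab i hi h, zero_mul]
      · rw [h, mul_zero])
  have h2 := hsl (fun i => a i * (1 - g i)) (fun i => b i * (1 - g i))
    (fun i hi => mul_nonneg (ha i hi) (by linarith [hg1 i hi]))
    (fun i hi => mul_nonneg (hb i hi) (by linarith [hg1 i hi]))
    (fun i hi h => by
      rcases mul_eq_zero.1 h with h | h
      · rw [hab i hi h, zero_mul]
      · rw [h, mul_zero])
  calc _ ≤ (∑ i ∈ s, klN (a i * g i) (b i * g i))
        + ∑ i ∈ s, klN (a i * (1 - g i)) (b i * (1 - g i)) := add_le_add h1 h2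
    _ = ∑ i ∈ s, klN (a i) (b i) := by
        rw [← Finset.sum_add_distrib]
        exact Finset.sum_congr rfl fun i hi =>
          (klN_split (ha i hi) (hb i hi) (hab i hi) (hg0 i hi) (hg1 i hi)).symm

/-- entropy bound: q log q + (1-q) log (1-q) ≥ -log 2 -/
lemma entropy_bound {q : ℝ} (h0 : 0 ≤ q) (h1 : q ≤ 1) :
    -Real.log 2 ≤ q * Real.log q + (1 - q) * Real.log (1 - q) := by
  rcases eq_or_lt_of_le h0 with rfl | hq0
  · simp; positivity
  rcases eq_or_lt_of_le h1 with rfl | hq1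
  · simp; positivity
  have hq1' : 0 < 1 - q := by linarith
  have l1 : 1 - (2*q)⁻¹ ≤ Real.log (2*q) := Real.one_sub_inv_le_log_of_pos (by positivity)
  have l2 : 1 - (2*(1-q))⁻¹ ≤ Real.log (2*(1-q)) := Real.one_sub_inv_le_log_of_pos (by positivity)
  have e1 : Real.log (2*q) = Real.log 2 + Real.log q := Real.log_mul two_ne_zero hq0.ne'
  have e2 : Real.log (2*(1-q)) = Real.log 2 + Real.log (1-q) := Real.log_mul two_ne_zero hq1'.ne'
  rw [e1] at l1; rw [e2] at l2
  have m1 : q * (1 - (2*q)⁻¹) ≤ q * (Real.log 2 + Real.log q) :=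
    mul_le_mul_of_nonneg_left l1 h0
  have m2 : (1-q) * (1 - (2*(1-q))⁻¹) ≤ (1-q) * (Real.log 2 + Real.log (1-q)) :=
    mul_le_mul_of_nonneg_left l2 hq1'.le
  have c1 : q * (1 - (2*q)⁻¹) = q - 1/2 := by field_simp
  have c2 : (1-q) * (1 - (2*(1-q))⁻¹) = (1-q) - 1/2 := by field_simp
  nlinarith [m1, m2]

/-- binary KL lower bound -/
lemma klN_binary {q s : ℝ} (hq0 : 0 ≤ q) (hq1 : q ≤ 1) (hs0 : 0 < s) (hs1 : s < 1) :
    q * Real.log (1/s) - Real.log 2 ≤ klN q s + klN (1 - q) (1 - s) := by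
  have hs1' : 0 < 1 - s := by linarith
  have h1 : q * Real.log q + q * Real.log (1/s) ≤ klN q s := by
    rcases eq_or_ne q 0 with rfl | hq
    · simp [klN]
    · have hq' : 0 < q := lt_of_le_of_ne hq0 (Ne.symm hq)
      rw [klN, if_neg hq, Real.log_div hq hs0.ne', Real.log_div one_ne_zero hs0.ne',
        Real.log_one]
      ring_nf
      exact le_refl _
  have h2 : (1 - q) * Real.log (1 - q) ≤ klN (1 - q) (1 - s) := by
    rcases eq_or_ne (1 - q) 0 with h | h
    · rw [h, klN_zero]; simp
    · have hq' : 0 < 1 - q := lt_of_le_of_ne (by linarith) (Ne.symm h)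
      rw [klN, if_neg h, Real.log_div h hs1'.ne']
      have : Real.log (1 - s) ≤ 0 := Real.log_nonpos hs1'.le (by linarith)
      nlinarith
  have := entropy_bound hq0 hq1
  linarith
open Finset

lemma card_contain {Ω : Type*} [Fintype Ω] [DecidableEq Ω] (k : ℕ) (x : Ω) (hk : 1 ≤ k) :
    ((Finset.univ.powersetCard k).filter (fun t : Finset Ω => x ∈ t)).card
      = (Fintype.card Ω - 1).choose (k - 1) := by
  have : ((Finset.univ.powersetCard k).filter (fun t : Finset Ω => x ∈ t)).card
      = ((Finset.univ.erase x).powersetCard (k-1)).card := by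
    refine Finset.card_bij' (fun t _ => t.erase x) (fun s _ => insert x s) ?hi ?hj ?li ?ri
    · intro t ht
      simp only [mem_filter, Finset.mem_powersetCard] at ht
      rw [Finset.mem_powersetCard]
      exact ⟨Finset.erase_subset_erase x ht.1.1,
        by rw [Finset.card_erase_of_mem ht.2, ht.1.2]⟩
    · intro s hs
      rw [Finset.mem_powersetCard] at hs
      have hx : x ∉ s := fun h => (Finset.mem_erase.1 (hs.1 h)).1 rfl
      simp only [mem_filter, Finset.mem_powersetCard]
      refine ⟨⟨Finset.subset_univ _, ?_⟩, Finset.mem_insert_self x s⟩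
      rw [Finset.card_insert_of_notMem hx, hs.2]
      omega
    · intro t ht
      simp only [mem_filter] at ht
      exact Finset.insert_erase ht.2
    · intro s hs
      rw [Finset.mem_powersetCard] at hs
      have hx : x ∉ s := fun h => (Finset.mem_erase.1 (hs.1 h)).1 rfl
      exact Finset.erase_insert hx
  rw [this, Finset.card_powersetCard, Finset.card_erase_of_mem (Finset.mem_univ x),
    Finset.card_univ]

lemma count_aux {Ω : Type*} [Fintype Ω] [DecidableEq Ω] (n k : ℕ)
    (hn : Fintype.card Ω = n) (hk : 1 ≤ k) (hkn : k ≤ n) (h : Ω → ℝ) :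
    ∑ t : Finset Ω, (if t.card = k then (1:ℝ)/(n.choose k) else 0) * ∑ x ∈ t, h x
      = ((k:ℝ)/n) * ∑ x, h x := by
  have hc : (0:ℝ) < (n.choose k : ℝ) := by exact_mod_cast Nat.choose_pos hkn
  have hn0 : 0 < n := lt_of_lt_of_le hk hkn
  rw [← Finset.sum_filter_add_sum_filter_not Finset.univ (fun t : Finset Ω => t.card = k)]
  have h2 : ∑ t ∈ Finset.univ.filter (fun t : Finset Ω => ¬ t.card = k),
      (if t.card = k then (1:ℝ)/(n.choose k) else 0) * ∑ x ∈ t, h x = 0 := by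
    apply Finset.sum_eq_zero
    intro t ht
    rw [Finset.mem_filter] at ht
    rw [if_neg ht.2, zero_mul]
  rw [h2, add_zero]
  have h3 : ∑ t ∈ Finset.univ.filter (fun t : Finset Ω => t.card = k),
      (if t.card = k then (1:ℝ)/(n.choose k) else 0) * ∑ x ∈ t, h x
      = (1/(n.choose k : ℝ)) * ∑ t ∈ Finset.univ.powersetCard k, ∑ x ∈ t, h x := by
    rw [Finset.mul_sum]
    apply Finset.sum_congr
    · ext t
      simp [Finset.mem_powersetCard_univ]
    · intro t ht
      rw [Finset.mem_powersetCard_univ] at ht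
      rw [if_pos ht]
  rw [h3]
  have h4 : ∑ t ∈ Finset.univ.powersetCard k, ∑ x ∈ t, h x
      = ∑ x, h x * ((n-1).choose (k-1) : ℝ) := by
    have hrw : ∀ t ∈ Finset.univ.powersetCard k, ∑ x ∈ t, h x
        = ∑ x : Ω, if x ∈ t then h x else 0 := by
      intro t _
      rw [Finset.sum_ite_mem, Finset.univ_inter]
    rw [Finset.sum_congr rfl hrw, Finset.sum_comm]
    apply Finset.sum_congr rfl
    intro x _
    rw [← Finset.sum_filter, Finset.sum_const]
    have hcc := card_contain k x hk
    rw [hn] at hcc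
    rw [hcc, nsmul_eq_mul, mul_comm]
  rw [h4]
  have key : (1/(n.choose k : ℝ)) * ((n-1).choose (k-1) : ℝ) = (k:ℝ)/n := by
    have hnat : n * ((n-1).choose (k-1)) = k * (n.choose k) := by
      obtain ⟨m, rfl⟩ : ∃ m, n = m + 1 := ⟨n - 1, by omega⟩
      obtain ⟨j, rfl⟩ : ∃ j, k = j + 1 := ⟨k - 1, by omega⟩
      simp only [Nat.add_sub_cancel]
      rw [Nat.add_one_mul_choose_eq]
      exact Nat.mul_comm _ _
    have hnat' : (n:ℝ) * ((n-1).choose (k-1) : ℝ) = (k:ℝ) * (n.choose k : ℝ) := by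
      exact_mod_cast hnat
    have hnR : (0:ℝ) < n := by exact_mod_cast hn0
    field_simp
    linarith
  rw [← key]
  rw [Finset.mul_sum, Finset.mul_sum]
  apply Finset.sum_congr rfl
  intro x _
  ring


lemma klTerm2_eq' (a b : ℝ) : klTerm2 a b = klN a b / Real.log 2 := by
  unfold klTerm2 klN Real.logb
  split <;> simp [mul_div_assoc]

open Finset in
theorem learning_under_dependence {Ω F : Type*}
    [Fintype Ω] [DecidableEq Ω] [Fintype F]
    (n k : ℕ) (hn : Fintype.card Ω = n) (hk : 1 ≤ k) (hkn : k < n)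
    -- joint pmf of (T, F, X), with T supported on k-element subsets
    (μ : Finset Ω → F → Ω → ℝ)
    (hpos : ∀ t f x, 0 ≤ μ t f x)
    (hsum : ∑ t, ∑ f, ∑ x, μ t f x = 1)
    (hsupp : ∀ t f x, μ t f x ≠ 0 → t.card = k)
    -- marginals
    (pT : Finset Ω → ℝ) (hpT : ∀ t, pT t = ∑ f, ∑ x, μ t f x)
    (pF : F → ℝ) (hpF : ∀ f, pF f = ∑ t, ∑ x, μ t f x)
    (pTF : Finset Ω → F → ℝ) (hpTF : ∀ t f, pTF t f = ∑ x, μ t f x)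
    (pFX : F → Ω → ℝ) (hpFX : ∀ f x, pFX f x = ∑ t, μ t f x)
    -- conditional independence of X and T given F
    (hindep : ∀ t f x, μ t f x * pF f = pTF t f * pFX f x)
    -- q = Pr(X ∈ T)
    (q : ℝ) (hq : q = ∑ t, ∑ f, ∑ x, (if x ∈ t then μ t f x else 0)) :
    q ≤ ((∑ t, ∑ f, klTerm2 (pTF t f) (pT t * pF f))        -- I(T;F)
          + (∑ t, klTerm2 (pT t) (1 / (n.choose k : ℝ)))    -- D(P_T ‖ U_T)
          + 1)
        / Real.logb 2 ((n : ℝ) / k) := by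
  classical
  set c : ℝ := (n.choose k : ℝ) with hc_def
  have hn0 : 0 < n := lt_trans (Nat.lt_of_lt_of_le Nat.zero_lt_one hk) hkn
  have hnR : (0:ℝ) < n := by exact_mod_cast hn0
  have hkR : (0:ℝ) < k := by exact_mod_cast hk
  have hknR : (k:ℝ) < n := by exact_mod_cast hkn
  have hc : (0:ℝ) < c := by
    rw [hc_def]; exact_mod_cast Nat.choose_pos (le_of_lt hkn)
  have hlog2 : 0 < Real.log 2 := Real.log_pos one_lt_two
  have hL : 0 < Real.logb 2 ((n:ℝ)/k) :=
    Real.logb_pos one_lt_two ((one_lt_div hkR).2 hknR)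
  have hpTF_nn : ∀ t f, 0 ≤ pTF t f := fun t f => by
    rw [hpTF]; exact Finset.sum_nonneg fun x _ => hpos t f x
  have hpT_nn : ∀ t, 0 ≤ pT t := fun t => by
    rw [hpT]; exact Finset.sum_nonneg fun f _ => Finset.sum_nonneg fun x _ => hpos t f x
  have hpF_nn : ∀ f, 0 ≤ pF f := fun f => by
    rw [hpF]; exact Finset.sum_nonneg fun t _ => Finset.sum_nonneg fun x _ => hpos t f x
  have hpFX_nn : ∀ f x, 0 ≤ pFX f x := fun f x => by
    rw [hpFX]; exact Finset.sum_nonneg fun t _ => hpos t f x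
  have hpT_sum : ∀ t, pT t = ∑ f, pTF t f := fun t => by
    rw [hpT]; exact Finset.sum_congr rfl fun f _ => (hpTF t f).symm
  have hpF_sum_t : ∀ f, pF f = ∑ t, pTF t f := fun f => by
    rw [hpF]; exact Finset.sum_congr rfl fun t _ => (hpTF t f).symm
  have hpF_sum_x : ∀ f, pF f = ∑ x, pFX f x := fun f => by
    rw [hpF, Finset.sum_comm]
    exact Finset.sum_congr rfl fun x _ => (hpFX f x).symm
  have hsum_pTF : ∑ t, ∑ f, pTF t f = 1 := by
    rw [← hsum]
    exact Finset.sum_congr rfl fun t _ => Finset.sum_congr rfl fun f _ => hpTF t f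
  have hsum_pF : ∑ f, pF f = 1 := by
    rw [show ∑ f, pF f = ∑ f, ∑ t, pTF t f from Finset.sum_congr rfl fun f _ => hpF_sum_t f,
      Finset.sum_comm, hsum_pTF]
  have hμ_pF : ∀ t f x, pF f = 0 → μ t f x = 0 := by
    intro t f x h
    have h2 : ∑ t', ∑ x', μ t' f x' = 0 := by rw [← hpF]; exact h
    have h3 := (Finset.sum_eq_zero_iff_of_nonneg
      (fun t' _ => Finset.sum_nonneg fun x' _ => hpos t' f x')).1 h2 t (Finset.mem_univ t)
    exact (Finset.sum_eq_zero_iff_of_nonneg (fun x' _ => hpos t f x')).1 h3 x (Finset.mem_univ x)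
  have hpTF_pF : ∀ t f, pF f = 0 → pTF t f = 0 := by
    intro t f h
    rw [hpTF]
    exact Finset.sum_eq_zero fun x _ => hμ_pF t f x h
  have hpFX_pF : ∀ f x, pF f = 0 → pFX f x = 0 := by
    intro f x h
    rw [hpFX]
    exact Finset.sum_eq_zero fun t _ => hμ_pF t f x h
  have hpTF_card : ∀ t f, t.card ≠ k → pTF t f = 0 := by
    intro t f h
    rw [hpTF]
    exact Finset.sum_eq_zero fun x _ => by
      by_contra hx
      exact h (hsupp t f x hx)
  have hpTF_pT : ∀ t f, pT t = 0 → pTF t f = 0 := by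
    intro t f h
    have h2 : ∑ f', pTF t f' = 0 := by rw [← hpT_sum]; exact h
    exact (Finset.sum_eq_zero_iff_of_nonneg (fun f' _ => hpTF_nn t f')).1 h2 f (Finset.mem_univ f)
  set u : Finset Ω → ℝ := fun t => if t.card = k then 1/c else 0 with hu_def
  have hu_nn : ∀ t, 0 ≤ u t := fun t => by
    simp only [hu_def]; split
    · positivity
    · exact le_refl 0
  set g : Finset Ω → F → ℝ :=
    fun t f => if pF f = 0 then 0 else (∑ x ∈ t, pFX f x) / pF f with hg_def
  have hg0 : ∀ t f, 0 ≤ g t f := by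
    intro t f
    simp only [hg_def]; split
    · exact le_refl 0
    · exact div_nonneg (Finset.sum_nonneg fun x _ => hpFX_nn f x) (hpF_nn f)
  have hg1 : ∀ t f, g t f ≤ 1 := by
    intro t f
    simp only [hg_def]; split
    · exact zero_le_one
    · rename_i h
      have hpf : 0 < pF f := lt_of_le_of_ne (hpF_nn f) (Ne.symm h)
      rw [div_le_one hpf, hpF_sum_x f]
      exact Finset.sum_le_sum_of_subset_of_nonneg (Finset.subset_univ t)
        (fun x _ _ => hpFX_nn f x)
  have hag : ∀ t f, pTF t f * g t f = ∑ x ∈ t, μ t f x := by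
    intro t f
    simp only [hg_def]
    split
    · rename_i h
      rw [hpTF_pF t f h, zero_mul]
      exact (Finset.sum_eq_zero fun x _ => hμ_pF t f x h).symm
    · rename_i h
      have hx : ∀ x ∈ t, μ t f x = pTF t f * pFX f x / pF f := fun x _ => by
        rw [eq_div_iff h]; exact hindep t f x
      rw [Finset.sum_congr rfl hx, ← Finset.sum_div, ← Finset.mul_sum, mul_div_assoc]
  have hbg : ∀ t f, (u t * pF f) * g t f = u t * ∑ x ∈ t, pFX f x := by
    intro t f
    simp only [hg_def]
    split
    · rename_i h
      rw [Finset.sum_eq_zero fun x _ => hpFX_pF f x h, h]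
      ring
    · rename_i h
      field_simp
  have hq' : ∑ t, ∑ f, pTF t f * g t f = q := by
    rw [hq]
    refine Finset.sum_congr rfl fun t _ => Finset.sum_congr rfl fun f _ => ?_
    rw [hag t f, Finset.sum_ite_mem, Finset.univ_inter]
  have hbq : ∑ t, ∑ f, (u t * pF f) * g t f = (k:ℝ)/n := by
    rw [Finset.sum_congr rfl fun t (_ : t ∈ Finset.univ) =>
      Finset.sum_congr rfl fun f _ => hbg t f, Finset.sum_comm]
    have hf : ∀ f : F, ∑ t : Finset Ω, u t * ∑ x ∈ t, pFX f x = ((k:ℝ)/n) * pF f := by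
      intro f
      have := count_aux n k hn hk (le_of_lt hkn) (pFX f)
      simp only [hu_def, hc_def]
      rw [this, ← hpF_sum_x f]
    rw [Finset.sum_congr rfl fun f _ => hf f, ← Finset.mul_sum, hsum_pF, mul_one]
  have hu_sum : ∑ t : Finset Ω, u t = 1 := by
    simp only [hu_def]
    rw [Finset.sum_ite, Finset.sum_const, Finset.sum_const_zero, add_zero]
    have : Finset.univ.filter (fun t : Finset Ω => t.card = k) = Finset.univ.powersetCard k := by
      ext t
      simp [Finset.mem_powersetCard_univ]
    rw [this, Finset.card_powersetCard, Finset.card_univ, hn, nsmul_eq_mul, mul_one_div,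
      ← hc_def, div_self hc.ne']
  have hb_tot : ∑ t, ∑ f, u t * pF f = 1 := by
    have : ∀ t : Finset Ω, ∑ f, u t * pF f = u t := by
      intro t
      rw [← Finset.mul_sum, hsum_pF, mul_one]
    rw [Finset.sum_congr rfl fun t _ => this t, hu_sum]
  have ha1 : ∑ t, ∑ f, pTF t f * (1 - g t f) = 1 - q := by
    have : ∀ t f, pTF t f * (1 - g t f) = pTF t f - pTF t f * g t f := fun t f => by ring
    rw [Finset.sum_congr rfl fun t (_ : t ∈ Finset.univ) => Finset.sum_congr rfl fun f _ => this t f]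
    rw [Finset.sum_congr rfl fun t (_ : t ∈ Finset.univ) => Finset.sum_sub_distrib _ _,
      Finset.sum_sub_distrib, hsum_pTF, hq']
  have hb1 : ∑ t, ∑ f, (u t * pF f) * (1 - g t f) = 1 - (k:ℝ)/n := by
    have : ∀ t f, (u t * pF f) * (1 - g t f) = u t * pF f - (u t * pF f) * g t f := fun t f => by ring
    rw [Finset.sum_congr rfl fun t (_ : t ∈ Finset.univ) => Finset.sum_congr rfl fun f _ => this t f]
    rw [Finset.sum_congr rfl fun t (_ : t ∈ Finset.univ) => Finset.sum_sub_distrib _ _,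
      Finset.sum_sub_distrib, hb_tot, hbq]
  have hq0 : 0 ≤ q := by
    rw [← hq']
    exact Finset.sum_nonneg fun t _ => Finset.sum_nonneg fun f _ =>
      mul_nonneg (hpTF_nn t f) (hg0 t f)
  have hq1 : q ≤ 1 := by
    rw [← hq', ← hsum_pTF]
    exact Finset.sum_le_sum fun t _ => Finset.sum_le_sum fun f _ => by
      calc pTF t f * g t f ≤ pTF t f * 1 :=
            mul_le_mul_of_nonneg_left (hg1 t f) (hpTF_nn t f)
        _ = pTF t f := mul_one _
  -- data processing
  have hdp := klN_dp (Finset.univ : Finset (Finset Ω × F))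
    (fun p => pTF p.1 p.2) (fun p => u p.1 * pF p.2) (fun p => g p.1 p.2)
    (fun p _ => hpTF_nn p.1 p.2)
    (fun p _ => mul_nonneg (hu_nn p.1) (hpF_nn p.2))
    (fun p _ h => by
      rcases mul_eq_zero.1 h with h | h
      · apply hpTF_card p.1 p.2
        intro hcard
        simp only [hu_def, if_pos hcard] at h
        exact absurd h (by positivity)
      · exact hpTF_pF p.1 p.2 h)
    (fun p _ => hg0 p.1 p.2) (fun p _ => hg1 p.1 p.2)
    (fun cc dd hcc hdd hcd => klN_sum_le _ cc dd hcc hdd hcd)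
  simp only [Fintype.sum_prod_type] at hdp
  rw [hq', hbq, ha1, hb1] at hdp
  -- decompose the reference measure
  have heq : ∑ t, ∑ f, klN (pTF t f) (u t * pF f)
      = (∑ t, ∑ f, klN (pTF t f) (pT t * pF f)) + ∑ t, klN (pT t) (1/c) := by
    rw [← Finset.sum_add_distrib]
    refine Finset.sum_congr rfl fun t _ => ?_
    have hterm : ∀ f, klN (pTF t f) (u t * pF f)
        = klN (pTF t f) (pT t * pF f) + pTF t f * Real.log (pT t * c) := by
      intro f
      rcases eq_or_ne (pTF t f) 0 with h | h
      · rw [h, klN_zero, klN_zero, zero_mul, add_zero]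
      · have hpf : 0 < pF f := lt_of_le_of_ne (hpF_nn f) (fun hh => h (hpTF_pF t f hh.symm))
        have hpt : 0 < pT t := by
          rcases eq_or_lt_of_le (hpT_nn t) with hh | hh
          · exact absurd (hpTF_pT t f hh.symm) h
          · exact hh
        have hcard : t.card = k := by
          by_contra hh
          exact h (hpTF_card t f hh)
        have hut : u t = 1/c := by simp only [hu_def, if_pos hcard]
        have hx : 0 < pTF t f := lt_of_le_of_ne (hpTF_nn t f) (Ne.symm h)
        rw [hut, klN, klN, if_neg h, if_neg h, ← mul_add]
        congr 1
        rw [Real.log_div h (by positivity), Real.log_div h (by positivity),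
          Real.log_mul (by positivity : (1:ℝ)/c ≠ 0) hpf.ne',
          Real.log_mul hpt.ne' hpf.ne',
          Real.log_mul hpt.ne' hc.ne', Real.log_div one_ne_zero hc.ne', Real.log_one]
        ring
    rw [Finset.sum_congr rfl fun f _ => hterm f, Finset.sum_add_distrib, ← Finset.sum_mul,
      ← hpT_sum]
    congr 1
    rcases eq_or_ne (pT t) 0 with h | h
    · rw [h, klN_zero, zero_mul]
    · rw [klN, if_neg h, div_div_eq_mul_div, div_one]
  rw [heq] at hdp
  -- binary bound
  have hbin := klN_binary hq0 hq1 (div_pos hkR hnR) ((div_lt_one hnR).2 hknR)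
  rw [one_div_div] at hbin
  have main : q * Real.log ((n:ℝ)/k)
      ≤ (∑ t, ∑ f, klN (pTF t f) (pT t * pF f)) + (∑ t, klN (pT t) (1/c)) + Real.log 2 := by
    have := le_trans hbin hdp
    linarith
  -- conclusion
  rw [le_div_iff₀ hL]
  have hlogb : Real.logb 2 ((n:ℝ)/k) = Real.log ((n:ℝ)/k) / Real.log 2 := rfl
  have hrw1 : ∀ t f, klTerm2 (pTF t f) (pT t * pF f) = klN (pTF t f) (pT t * pF f) / Real.log 2 :=
    fun t f => klTerm2_eq' _ _
  have hrw2 : ∀ t, klTerm2 (pT t) (1/c) = klN (pT t) (1/c) / Real.log 2 :=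
    fun t => klTerm2_eq' _ _
  calc q * Real.logb 2 ((n:ℝ)/k)
      = (q * Real.log ((n:ℝ)/k)) / Real.log 2 := by rw [hlogb]; ring
    _ ≤ ((∑ t, ∑ f, klN (pTF t f) (pT t * pF f)) + (∑ t, klN (pT t) (1/c)) + Real.log 2)
        / Real.log 2 := (div_le_div_iff_of_pos_right hlog2).mpr main
    _ = (∑ t, ∑ f, klTerm2 (pTF t f) (pT t * pF f)) + (∑ t, klTerm2 (pT t) (1/c)) + 1 := by
          rw [add_div, add_div, div_self hlog2.ne']
          congr 1
          congr 1
          · rw [Finset.sum_congr rfl fun t (_ : t ∈ Finset.univ) =>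
              Finset.sum_congr rfl fun f _ => hrw1 t f]
            rw [Finset.sum_div]
            exact Finset.sum_congr rfl fun t _ => Finset.sum_div _ _ _
          · rw [Finset.sum_congr rfl fun t _ => hrw2 t, ← Finset.sum_div]
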